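/- Wasserstein stability of the Christoffel polynomial: let X, Y ⊆ [−1,1]ⁿ be finite nondegenerate sample sets with empirical measures μ_X, μ_Y, and let Λ_X, Λ_Y be their degree-d Christoffel polynomials. With C = 4·binom(n+d,d)·d², we have for all x ∈ ℝⁿ: |Λ_X(x) − Λ_Y(x)| ≤ C · ‖Λ_X‖_∞ · d_W(μ_X, μ_Y) · Λ_Y(x), where ‖Λ_X‖_∞ = max_{x∈[−1,1]ⁿ} Λ_X(x) and d_W is the Wasserstein distance. -/

import Mathlib

section Helpers
open Real Polynomial Polynomial.Chebyshev intervalIntegral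

lemma abs_sin_nat_mul_le (k : ℕ) (θ : ℝ) : |Real.sin (k * θ)| ≤ k * |Real.sin θ| := by
  induction k with
  | zero => simp
  | succ k ih =>
    have : ((k:ℝ)+1) * θ = k * θ + θ := by ring
    push_cast
    rw [this, Real.sin_add]
    calc |Real.sin (k*θ) * Real.cos θ + Real.cos (k*θ) * Real.sin θ|
        ≤ |Real.sin (k*θ) * Real.cos θ| + |Real.cos (k*θ) * Real.sin θ| := abs_add_le _ _
      _ ≤ |Real.sin (k*θ)| * 1 + 1 * |Real.sin θ| := by
          rw [abs_mul, abs_mul]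
          gcongr <;> [exact Real.abs_cos_le_one θ; exact Real.abs_cos_le_one _]
      _ ≤ (k:ℝ) * |Real.sin θ| + 1 * |Real.sin θ| := by rw [mul_one]; gcongr
      _ = ((k:ℝ)+1) * |Real.sin θ| := by ring

lemma U_abs_le (k : ℕ) : ∀ t ∈ Set.Icc (-1:ℝ) 1, |(Chebyshev.U ℝ k).eval t| ≤ (k:ℝ) + 1 := by
  have hIoo : ∀ t ∈ Set.Ioo (-1:ℝ) 1, |(Chebyshev.U ℝ k).eval t| ≤ (k:ℝ) + 1 := by
    intro t ht
    set θ := Real.arccos t with hθ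
    have ht1 : -1 ≤ t := le_of_lt ht.1
    have ht2 : t ≤ 1 := le_of_lt ht.2
    have hcos : Real.cos θ = t := Real.cos_arccos ht1 ht2
    have hsinpos : 0 < Real.sin θ := by
      rw [hθ, Real.sin_arccos]
      have : 0 < 1 - t^2 := by nlinarith [ht.1, ht.2]
      exact Real.sqrt_pos.2 this
    have hU := Polynomial.Chebyshev.U_real_cos θ k
    rw [hcos] at hU
    have h1 : |(Chebyshev.U ℝ k).eval t| * Real.sin θ = |Real.sin (((k:ℤ)+1) * θ)| := by
      rw [← abs_of_pos hsinpos, ← abs_mul, hU]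
    have h2 : |Real.sin (((k:ℤ)+1) * θ)| ≤ ((k:ℝ)+1) * Real.sin θ := by
      have := abs_sin_nat_mul_le (k+1) θ
      push_cast at this ⊢
      rw [abs_of_pos hsinpos] at this
      exact this
    have hle : |(Chebyshev.U ℝ k).eval t| * Real.sin θ ≤ ((k:ℝ)+1) * Real.sin θ := by
      rw [h1]; exact h2
    calc |(Chebyshev.U ℝ k).eval t| = |(Chebyshev.U ℝ k).eval t| * Real.sin θ / Real.sin θ := by
          field_simp
      _ ≤ ((k:ℝ)+1) * Real.sin θ / Real.sin θ := (div_le_div_iff_of_pos_right hsinpos).mpr hle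
      _ = (k:ℝ) + 1 := by field_simp
  have hclosed : IsClosed {t : ℝ | |(Chebyshev.U ℝ k).eval t| ≤ (k:ℝ) + 1} :=
    isClosed_le ((Chebyshev.U ℝ k).continuous.abs) continuous_const
  intro t ht
  have : Set.Icc (-1:ℝ) 1 ⊆ {t : ℝ | |(Chebyshev.U ℝ k).eval t| ≤ (k:ℝ) + 1} := by
    rw [← closure_Ioo (by norm_num : (-1:ℝ) ≠ 1)]
    exact hclosed.closure_subset_iff.mpr hIoo
  exact this ht

lemma integral_cos_smul (c : ℝ) (hc : c ≠ 0) :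
    ∫ θ in (0:ℝ)..π, Real.cos (c*θ) = Real.sin (c*π) / c := by
  have := intervalIntegral.integral_comp_mul_left (fun x => Real.cos x) hc (a := 0) (b := π)
  simp only [mul_zero] at this
  rw [this, integral_cos]
  simp [smul_eq_mul]
  ring

lemma cos_orth (j k : ℕ) (hj : 1 ≤ j) :
    ∫ θ in (0:ℝ)..π, Real.cos (j*θ) * Real.cos (k*θ) =
      if j = k then π/2 else 0 := by
  have key : ∀ θ : ℝ, Real.cos (j*θ) * Real.cos (k*θ)
      = (Real.cos (((j:ℝ)+k)*θ) + Real.cos (((j:ℝ)-k)*θ))/2 := by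
    intro θ
    have h1 := Real.cos_add ((j:ℝ)*θ) ((k:ℝ)*θ)
    have h2 := Real.cos_sub ((j:ℝ)*θ) ((k:ℝ)*θ)
    have e1 : ((j:ℝ)+k)*θ = (j:ℝ)*θ + (k:ℝ)*θ := by ring
    have e2 : ((j:ℝ)-k)*θ = (j:ℝ)*θ - (k:ℝ)*θ := by ring
    rw [e1, e2, h1, h2]; ring
  rw [intervalIntegral.integral_congr (fun θ _ => key θ)]
  have hint1 : IntervalIntegrable (fun θ => Real.cos (((j:ℝ)+k)*θ)) MeasureTheory.volume 0 π :=
    (Real.continuous_cos.comp (continuous_const.mul continuous_id)).intervalIntegrable 0 π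
  have hint2 : IntervalIntegrable (fun θ => Real.cos (((j:ℝ)-k)*θ)) MeasureTheory.volume 0 π :=
    (Real.continuous_cos.comp (continuous_const.mul continuous_id)).intervalIntegrable 0 π
  have split : (∫ θ in (0:ℝ)..π, (Real.cos (((j:ℝ)+k)*θ) + Real.cos (((j:ℝ)-k)*θ))/2)
      = ((∫ θ in (0:ℝ)..π, Real.cos (((j:ℝ)+k)*θ)) + ∫ θ in (0:ℝ)..π, Real.cos (((j:ℝ)-k)*θ))/2 := by
    rw [← intervalIntegral.integral_add hint1 hint2]
    simp [intervalIntegral.integral_div]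
  rw [split]
  have hjk : ((j:ℝ)+k) ≠ 0 := by positivity
  have I1 : (∫ θ in (0:ℝ)..π, Real.cos (((j:ℝ)+k)*θ)) = 0 := by
    rw [integral_cos_smul _ hjk]
    have : ((j:ℝ)+k) = ((j+k : ℕ) : ℝ) := by push_cast; ring
    rw [this, Real.sin_nat_mul_pi]; simp
  by_cases h : j = k
  · subst h
    have : ((j:ℝ)-j) = 0 := by ring
    rw [I1, this]
    simp [Real.pi_ne_zero]
  · have hd : ((j:ℝ)-k) ≠ 0 := by
      intro hh
      apply h
      have : (j:ℝ) = k := by linarith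
      exact_mod_cast this
    have I2 : (∫ θ in (0:ℝ)..π, Real.cos (((j:ℝ)-k)*θ)) = 0 := by
      rw [integral_cos_smul _ hd]
      have : ((j:ℝ)-k) = (((j:ℤ)-k : ℤ) : ℝ) := by push_cast; ring
      rw [this, Real.sin_int_mul_pi]; simp
    rw [I1, I2]
    simp [h]

noncomputable def spanT (m : ℕ) : Submodule ℝ ℝ[X] :=
  Submodule.span ℝ (Set.range fun k : Fin (m+1) => T ℝ (k:ℕ))

lemma spanT_mono {j m : ℕ} (h : j ≤ m) : spanT j ≤ spanT m := by
  apply Submodule.span_le.mpr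
  rintro _ ⟨k, rfl⟩
  exact Submodule.subset_span ⟨⟨(k:ℕ), by omega⟩, rfl⟩

lemma X_mul_T (k : ℕ) : (2:ℝ) • ((X:ℝ[X]) * T ℝ ((k:ℤ)+1)) = T ℝ ((k:ℤ)+2) + T ℝ (k:ℤ) := by
  have h := T_add_two ℝ (k:ℤ)
  rw [smul_eq_C_mul]
  have hC : (Polynomial.C (2:ℝ)) = (2:ℝ[X]) := map_ofNat Polynomial.C 2
  rw [hC]
  linear_combination -h

lemma pow_mem_span_T (j : ℕ) : (X : ℝ[X])^j ∈ spanT j := by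
  induction j with
  | zero =>
    have : (X : ℝ[X])^0 = T ℝ 0 := by simp [T_zero]
    rw [this]
    exact Submodule.subset_span ⟨⟨0, by omega⟩, by simp⟩
  | succ j ih =>
    rw [show spanT j = Submodule.span ℝ (Set.range fun k : Fin (j+1) => T ℝ (k:ℕ)) from rfl,
      Submodule.mem_span_range_iff_exists_fun] at ih
    obtain ⟨c, hc⟩ := ih
    have : (X : ℝ[X])^(j+1) = X * (X:ℝ[X])^j := by ring
    rw [this, ← hc, Finset.mul_sum]
    apply Submodule.sum_mem
    intro k _
    rw [mul_smul_comm]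
    apply Submodule.smul_mem
    rcases Nat.eq_zero_or_pos (k:ℕ) with h0 | hpos
    · have : (X : ℝ[X]) * T ℝ (k:ℕ) = T ℝ 1 := by rw [h0]; simp [T_zero, T_one]
      rw [this]
      exact Submodule.subset_span ⟨⟨1, by omega⟩, by simp⟩
    · obtain ⟨k', hk'⟩ : ∃ k', (k:ℕ) = k' + 1 := ⟨(k:ℕ)-1, by omega⟩
      have hcast : ((k:ℕ):ℤ) = (k':ℤ) + 1 := by rw [hk']; push_cast; ring
      rw [hcast]
      have h2 := X_mul_T k'
      have hx : (X:ℝ[X]) * T ℝ ((k':ℤ)+1) = (2⁻¹:ℝ) • (T ℝ ((k':ℤ)+2) + T ℝ (k':ℤ)) := by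
        rw [← h2, smul_smul]; norm_num
      rw [hx]
      have hk2 : k' + 2 ≤ j + 1 := by have := k.2; omega
      have m1 : T ℝ ((k'+2 : ℕ) : ℤ) ∈ spanT (j+1) :=
        Submodule.subset_span ⟨⟨k'+2, by omega⟩, by norm_num⟩
      have m2 : T ℝ ((k' : ℕ) : ℤ) ∈ spanT (j+1) :=
        Submodule.subset_span ⟨⟨k', by omega⟩, by norm_num⟩
      push_cast at m1 m2
      exact Submodule.smul_mem _ _ (Submodule.add_mem _ m1 m2)

lemma cheb_expand {m : ℕ} (q : ℝ[X]) (hq : q.natDegree ≤ m) :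
    ∃ c : Fin (m+1) → ℝ, q = ∑ k, c k • T ℝ (k:ℕ) := by
  have : q ∈ spanT m := by
    rw [q.as_sum_range' (m+1) (by omega)]
    apply Submodule.sum_mem
    intro j hj
    rw [← C_mul_X_pow_eq_monomial, ← smul_eq_C_mul]
    exact Submodule.smul_mem _ _
      (spanT_mono (Finset.mem_range_succ_iff.mp hj) (pow_mem_span_T j))
  rw [show spanT m = Submodule.span ℝ (Set.range fun k : Fin (m+1) => T ℝ (k:ℕ)) from rfl,
    Submodule.mem_span_range_iff_exists_fun] at this
  obtain ⟨c, hc⟩ := this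
  exact ⟨c, hc.symm⟩

lemma coeff_bound {m : ℕ} (q : ℝ[X]) (c : Fin (m+1) → ℝ)
    (hrep : q = ∑ k, c k • T ℝ (k:ℕ)) (M0 : ℝ)
    (hb : ∀ t ∈ Set.Icc (-1:ℝ) 1, |q.eval t| ≤ M0) :
    ∀ j : Fin (m+1), 1 ≤ (j:ℕ) → |c j| ≤ 2 * M0 := by
  intro j hj
  have heval : ∀ θ : ℝ, q.eval (Real.cos θ) = ∑ k : Fin (m+1), c k * Real.cos ((k:ℕ)*θ) := by
    intro θ
    rw [hrep, Polynomial.eval_finset_sum]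
    refine Finset.sum_congr rfl fun k _ => ?_
    rw [Polynomial.eval_smul, smul_eq_mul]
    congr 1
    have := Polynomial.Chebyshev.T_real_cos θ ((k:ℕ):ℤ)
    rw [this]
    push_cast
    ring_nf
  have hcont : ∀ k : ℕ, Continuous fun θ : ℝ => Real.cos ((k:ℝ)*θ) :=
    fun k => Real.continuous_cos.comp (continuous_const.mul continuous_id)
  have hF : (∫ θ in (0:ℝ)..π, q.eval (Real.cos θ) * Real.cos ((j:ℕ)*θ)) = c j * (π/2) := by
    have : ∀ θ : ℝ, q.eval (Real.cos θ) * Real.cos ((j:ℕ)*θ)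
        = ∑ k : Fin (m+1), c k * (Real.cos (((j:ℕ):ℝ)*θ) * Real.cos (((k:ℕ):ℝ)*θ)) := by
      intro θ
      rw [heval θ, Finset.sum_mul]
      refine Finset.sum_congr rfl fun k _ => ?_
      ring
    rw [intervalIntegral.integral_congr (fun θ _ => this θ)]
    rw [intervalIntegral.integral_finset_sum]
    · have : ∀ k : Fin (m+1),
          (∫ θ in (0:ℝ)..π, c k * (Real.cos (((j:ℕ):ℝ)*θ) * Real.cos (((k:ℕ):ℝ)*θ)))
          = c k * if (j:ℕ) = (k:ℕ) then π/2 else 0 := by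
        intro k
        rw [intervalIntegral.integral_const_mul, cos_orth (j:ℕ) (k:ℕ) hj]
      rw [Finset.sum_congr rfl fun k _ => this k]
      rw [Finset.sum_eq_single j]
      · simp
      · intro k _ hk
        have : ¬((j:ℕ) = (k:ℕ)) := fun h => hk (Fin.ext h.symm)
        simp [this]
      · simp
    · intro k _
      exact (continuous_const.mul ((hcont j).mul (hcont k))).intervalIntegrable 0 π
  have hM0 : 0 ≤ M0 := le_trans (abs_nonneg _) (hb 0 (by norm_num))
  have hbound : |∫ θ in (0:ℝ)..π, q.eval (Real.cos θ) * Real.cos ((j:ℕ)*θ)| ≤ M0 * |π - 0| := by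
    rw [← Real.norm_eq_abs]
    apply intervalIntegral.norm_integral_le_of_norm_le_const
    intro θ _
    rw [Real.norm_eq_abs, abs_mul]
    calc |q.eval (Real.cos θ)| * |Real.cos ((j:ℕ)*θ)| ≤ M0 * 1 := by
          apply mul_le_mul (hb _ ⟨Real.neg_one_le_cos θ, Real.cos_le_one θ⟩)
            (Real.abs_cos_le_one _) (abs_nonneg _) hM0
      _ = M0 := mul_one M0
  rw [hF] at hbound
  rw [abs_mul, abs_of_pos (by positivity : (0:ℝ) < π/2)] at hbound
  have hπ : |π - 0| = π := by rw [sub_zero, abs_of_pos Real.pi_pos]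
  rw [hπ] at hbound
  nlinarith [Real.pi_pos, abs_nonneg (c j)]

lemma T_deriv_bound (k : ℕ) : ∀ t ∈ Set.Icc (-1:ℝ) 1,
    |(Polynomial.derivative (T ℝ (k:ℕ))).eval t| ≤ (k:ℝ)^2 := by
  intro t ht
  rcases Nat.eq_zero_or_pos k with h0 | hpos
  · subst h0
    simp [T_zero]
  · obtain ⟨k', rfl⟩ : ∃ k', k = k' + 1 := ⟨k-1, by omega⟩
    rw [T_derivative_eq_U (R := ℝ) ((k'+1:ℕ):ℤ)]
    have harg : ((k'+1:ℕ):ℤ) - 1 = ((k':ℕ):ℤ) := by push_cast; ring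
    rw [harg, Polynomial.eval_mul, abs_mul]
    have e1 : (Polynomial.eval t ((((k'+1:ℕ):ℤ)) : ℝ[X])) = ((k'+1:ℕ):ℝ) := by simp
    rw [e1, abs_of_nonneg (by positivity : (0:ℝ) ≤ ((k'+1:ℕ):ℝ))]
    have hU := U_abs_le k' t ht
    calc ((k'+1:ℕ):ℝ) * |(Chebyshev.U ℝ (k':ℕ)).eval t|
        ≤ ((k'+1:ℕ):ℝ) * ((k':ℝ)+1) := mul_le_mul_of_nonneg_left hU (by positivity)
      _ = ((k'+1:ℕ):ℝ)^2 := by push_cast; ring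

lemma markov_crude {m : ℕ} (q : ℝ[X]) (hdeg : q.natDegree ≤ m) (M0 : ℝ)
    (hb : ∀ t ∈ Set.Icc (-1:ℝ) 1, |q.eval t| ≤ M0) :
    ∀ t ∈ Set.Icc (-1:ℝ) 1,
      |(Polynomial.derivative q).eval t| ≤ (∑ k ∈ Finset.range (m+1), 2*(k:ℝ)^2) * M0 := by
  intro t ht
  obtain ⟨c, hc⟩ := cheb_expand q hdeg
  have hM0 : 0 ≤ M0 := le_trans (abs_nonneg _) (hb 0 (by norm_num))
  have hd : Polynomial.derivative q = ∑ k : Fin (m+1), c k • Polynomial.derivative (T ℝ (k:ℕ)) := by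
    rw [hc, map_sum]
    exact Finset.sum_congr rfl fun k _ => Polynomial.derivative_smul _ _
  rw [hd, Polynomial.eval_finset_sum]
  calc |∑ k : Fin (m+1), (c k • Polynomial.derivative (T ℝ (k:ℕ))).eval t|
      ≤ ∑ k : Fin (m+1), |(c k • Polynomial.derivative (T ℝ (k:ℕ))).eval t| :=
        Finset.abs_sum_le_sum_abs _ _
    _ ≤ ∑ k : Fin (m+1), 2*M0*(k:ℕ)^2 := by
        apply Finset.sum_le_sum
        intro k _
        rw [Polynomial.eval_smul, smul_eq_mul, abs_mul]
        rcases Nat.eq_zero_or_pos (k:ℕ) with h0 | hpos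
        · rw [h0]
          have := T_deriv_bound 0 t ht
          simp only [Nat.cast_zero] at this ⊢
          calc |c k| * |(Polynomial.derivative (T ℝ (0:ℕ))).eval t| ≤ |c k| * 0 := by
                apply mul_le_mul_of_nonneg_left _ (abs_nonneg _)
                simpa using this
            _ ≤ 2*M0*(0:ℝ)^2 := by simp [hM0]
        · have hck := coeff_bound q c hc M0 hb k hpos
          calc |c k| * |(Polynomial.derivative (T ℝ (k:ℕ))).eval t|
              ≤ (2*M0) * ((k:ℕ):ℝ)^2 := by
                apply mul_le_mul hck (T_deriv_bound (k:ℕ) t ht) (abs_nonneg _) (by positivity)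
            _ = 2*M0*((k:ℕ):ℝ)^2 := by ring
    _ = (∑ k ∈ Finset.range (m+1), 2*(k:ℝ)^2) * M0 := by
        rw [Finset.sum_mul, ← Fin.sum_univ_eq_sum_range (fun k => 2*(k:ℝ)^2*M0)]
        exact Finset.sum_congr rfl fun k _ => by ring

def Box (n : ℕ) : Set (Fin n → ℝ) := {x | ∀ i, |x i| ≤ 1}

noncomputable def C1d (d : ℕ) : ℝ := ∑ k ∈ Finset.range (d+1), 2*(k:ℝ)^2

lemma eval_aeval_poly {n : ℕ} (f : Fin n → Polynomial ℝ) (P : MvPolynomial (Fin n) ℝ) (t : ℝ) :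
    ((MvPolynomial.aeval f) P).eval t = MvPolynomial.eval (fun i => (f i).eval t) P := by
  induction P using MvPolynomial.induction_on with
  | C a => simp
  | add p q hp hq => simp [hp, hq]
  | mul_X p i hp => simp [hp]

lemma natDegree_aeval_le {n : ℕ} (f : Fin n → Polynomial ℝ) (hf : ∀ i, (f i).natDegree ≤ 1)
    (P : MvPolynomial (Fin n) ℝ) : ((MvPolynomial.aeval f) P).natDegree ≤ P.totalDegree := by
  rw [MvPolynomial.aeval_def, MvPolynomial.eval₂_eq]
  apply Polynomial.natDegree_sum_le_of_forall_le
  intro s hs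
  apply le_trans (Polynomial.natDegree_mul_le)
  have h1 : (algebraMap ℝ (Polynomial ℝ) (MvPolynomial.coeff s P)).natDegree = 0 := by
    simp [Polynomial.natDegree_C]
  rw [h1, zero_add]
  apply le_trans (Polynomial.natDegree_prod_le _ _)
  calc ∑ i ∈ s.support, ((f i)^(s i)).natDegree
      ≤ ∑ i ∈ s.support, s i := by
        apply Finset.sum_le_sum
        intro i _
        apply le_trans (Polynomial.natDegree_pow_le)
        calc s i * (f i).natDegree ≤ s i * 1 := Nat.mul_le_mul_left _ (hf i)
          _ = s i := Nat.mul_one _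
    _ = s.sum (fun _ e => e) := rfl
    _ ≤ P.totalDegree := MvPolynomial.le_totalDegree hs

lemma coord_lip {n d : ℕ} (P : MvPolynomial (Fin n) ℝ) (hdeg : P.totalDegree ≤ d) (M0 : ℝ)
    (hb : ∀ a ∈ Box n, |MvPolynomial.eval a P| ≤ M0) (a : Fin n → ℝ) (ha : a ∈ Box n)
    (k : Fin n) (s t : ℝ) (hs : |s| ≤ 1) (ht : |t| ≤ 1) :
    |MvPolynomial.eval (Function.update a k t) P - MvPolynomial.eval (Function.update a k s) P|
      ≤ C1d d * M0 * |t - s| := by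
  set f : Fin n → Polynomial ℝ := fun i => if i = k then Polynomial.X else Polynomial.C (a i)
    with hf
  set q : ℝ[X] := (MvPolynomial.aeval f) P with hq
  have hfdeg : ∀ i, (f i).natDegree ≤ 1 := by
    intro i
    rw [hf]
    by_cases h : i = k <;> simp [h, Polynomial.natDegree_X_le]
  have hqdeg : q.natDegree ≤ d := le_trans (natDegree_aeval_le f hfdeg P) hdeg
  have hqeval : ∀ u : ℝ, q.eval u = MvPolynomial.eval (Function.update a k u) P := by
    intro u
    rw [hq, eval_aeval_poly]
    have harg : (fun i => (f i).eval u) = Function.update a k u := by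
      funext i
      rw [hf, Function.update_apply]
      by_cases h : i = k <;> simp [h]
    rw [harg]
  have hub : ∀ u ∈ Set.Icc (-1:ℝ) 1, |q.eval u| ≤ M0 := by
    intro u hu
    rw [hqeval]
    apply hb
    intro i
    rw [Function.update_apply]
    by_cases h : i = k
    · simpa [h] using abs_le.mpr ⟨hu.1, hu.2⟩
    · simpa [h] using ha i
  have hderiv := markov_crude q hqdeg M0 hub
  have hdiff : ∀ u ∈ Set.Icc (-1:ℝ) 1, HasDerivWithinAt (fun x => q.eval x)
      ((Polynomial.derivative q).eval u) (Set.Icc (-1:ℝ) 1) u := by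
    intro u _
    exact (q.hasDerivAt u).hasDerivWithinAt
  have hmvt := Convex.norm_image_sub_le_of_norm_hasDerivWithin_le hdiff
    (C := C1d d * M0)
    (fun u hu => by rw [Real.norm_eq_abs]; simpa [C1d] using hderiv u hu)
    (convex_Icc _ _) (Set.mem_Icc.mpr (abs_le.mp hs)) (Set.mem_Icc.mpr (abs_le.mp ht))
  rw [Real.norm_eq_abs, Real.norm_eq_abs] at hmvt
  rw [← hqeval, ← hqeval]
  exact hmvt

lemma box_lip {n d : ℕ} (P : MvPolynomial (Fin n) ℝ) (hdeg : P.totalDegree ≤ d) (M0 : ℝ)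
    (hb : ∀ a ∈ Box n, |MvPolynomial.eval a P| ≤ M0)
    (x y : Fin n → ℝ) (hx : x ∈ Box n) (hy : y ∈ Box n) :
    |MvPolynomial.eval y P - MvPolynomial.eval x P|
      ≤ C1d d * M0 * ∑ k, |y k - x k| := by
  set w : ℕ → (Fin n → ℝ) := fun j i => if (i:ℕ) < j then y i else x i with hw
  have hwbox : ∀ j, w j ∈ Box n := by
    intro j i
    rw [hw]
    by_cases h : (i:ℕ) < j <;> simp [h]
    exacts [hy i, hx i]
  have hw0 : w 0 = x := by funext i; simp [hw]
  have hwn : w n = y := by funext i; simp [hw, i.2]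
  have key : ∀ j, j ≤ n →
      |MvPolynomial.eval (w j) P - MvPolynomial.eval x P|
        ≤ C1d d * M0 * ∑ k ∈ Finset.univ.filter (fun k : Fin n => (k:ℕ) < j), |y k - x k| := by
    intro j
    induction j with
    | zero => intro _; simp [hw0]
    | succ j ih =>
      intro hj1
      have hj : j < n := by omega
      set i0 : Fin n := ⟨j, hj⟩ with hi0
      have hstep : w (j+1) = Function.update (w j) i0 (y i0) := by
        funext i
        rw [Function.update_apply]
        by_cases h : i = i0
        · subst h; simp [hw, hi0]
        · have hne : (i:ℕ) ≠ j := fun hh => h (Fin.ext hh)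
          have : ((i:ℕ) < j + 1) ↔ ((i:ℕ) < j) := by omega
          simp [hw, h, this]
      have hfix : w j = Function.update (w j) i0 (x i0) := by
        funext i
        rw [Function.update_apply]
        by_cases h : i = i0
        · subst h; simp [hw, hi0]
        · simp [h]
      have hcoord := coord_lip P hdeg M0 hb (w j) (hwbox j) i0 (x i0) (y i0) (hx i0) (hy i0)
      rw [← hstep, ← hfix] at hcoord
      have hfilter : Finset.univ.filter (fun k : Fin n => (k:ℕ) < j+1)
          = insert i0 (Finset.univ.filter (fun k : Fin n => (k:ℕ) < j)) := by
        ext k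
        simp only [Finset.mem_filter, Finset.mem_univ, true_and, Finset.mem_insert]
        constructor
        · intro h
          rcases Nat.lt_succ_iff_lt_or_eq.mp h with h' | h'
          · exact Or.inr h'
          · exact Or.inl (Fin.ext h')
        · rintro (h | h)
          · rw [h, hi0]; exact Nat.lt_succ_self j
          · omega
      rw [hfilter, Finset.sum_insert (by simp [hi0])]
      calc |MvPolynomial.eval (w (j+1)) P - MvPolynomial.eval x P|
          ≤ |MvPolynomial.eval (w (j+1)) P - MvPolynomial.eval (w j) P|
            + |MvPolynomial.eval (w j) P - MvPolynomial.eval x P| := abs_sub_le _ _ _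
        _ ≤ C1d d * M0 * |y i0 - x i0|
            + C1d d * M0 * ∑ k ∈ Finset.univ.filter (fun k : Fin n => (k:ℕ) < j), |y k - x k| :=
            add_le_add hcoord (ih (by omega))
        _ = C1d d * M0 * (|y i0 - x i0|
            + ∑ k ∈ Finset.univ.filter (fun k : Fin n => (k:ℕ) < j), |y k - x k|) := by ring
  have := key n le_rfl
  rw [hwn] at this
  have hfull : Finset.univ.filter (fun k : Fin n => (k:ℕ) < n) = Finset.univ := by
    ext k; simp [k.2]
  rw [hfull] at this
  exact this

section transfer
variable {ι : Type} [Fintype ι] [DecidableEq ι]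

noncomputable def n2 (u : ι → ℝ) : ℝ := ∑ i, (u i)^2

lemma n2_nonneg (u : ι → ℝ) : 0 ≤ n2 u := Finset.sum_nonneg fun i _ => sq_nonneg _

lemma n2_eq_zero {u : ι → ℝ} (h : n2 u = 0) : u = 0 := by
  funext i
  have := (Finset.sum_eq_zero_iff_of_nonneg (fun i _ => sq_nonneg (u i))).mp h i (Finset.mem_univ i)
  exact pow_eq_zero_iff (by norm_num) |>.mp this

lemma dot_sq_le (u v : ι → ℝ) : (∑ i, u i * v i)^2 ≤ n2 u * n2 v :=
  Finset.sum_mul_sq_le_sq_mul_sq _ _ _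

lemma adjoint_dot (A : Matrix ι ι ℝ) (u w : ι → ℝ) :
    ∑ i, (A.transpose.mulVec u) i * w i = ∑ i, u i * (A.mulVec w) i := by
  simp only [Matrix.mulVec, dotProduct, Matrix.transpose_apply, Finset.sum_mul,
    Finset.mul_sum]
  rw [Finset.sum_comm]
  exact Finset.sum_congr rfl fun i _ => Finset.sum_congr rfl fun j _ => by ring

lemma transfer (A : Matrix ι ι ℝ) (K : ℝ) (hK : 0 ≤ K)
    (h : ∀ u : ι → ℝ, |n2 (A.transpose.mulVec u) - n2 u| ≤ K * n2 u) :
    ∀ w : ι → ℝ, |n2 (A.mulVec w) - n2 w| ≤ K * n2 w := by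
  have hup : ∀ u, n2 (A.transpose.mulVec u) ≤ (1+K) * n2 u := by
    intro u
    have := (abs_le.mp (h u)).2
    linarith
  have hlo : ∀ u, (1-K) * n2 u ≤ n2 (A.transpose.mulVec u) := by
    intro u
    have := (abs_le.mp (h u)).1
    linarith
  intro w
  rw [abs_le]
  constructor
  · -- lower bound : (1-K) * n2 w ≤ n2 (A.mulVec w), i.e. -(K*n2 w) ≤ n2 (A w) - n2 w
    rcases le_or_gt 1 K with hK1 | hK1
    · have := n2_nonneg (A.mulVec w)
      have := n2_nonneg w
      nlinarith
    · -- K < 1 : Aᵀ injective hence surjective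
      have hinj : Function.Injective (Matrix.mulVecLin A.transpose) := by
        rw [← LinearMap.ker_eq_bot, LinearMap.ker_eq_bot']
        intro u hu
        have h0 : n2 (A.transpose.mulVec u) = 0 := by
          rw [show A.transpose.mulVec u = 0 from hu]
          simp [n2]
        have := hlo u
        rw [h0] at this
        have hn2 : n2 u = 0 := le_antisymm (by nlinarith [n2_nonneg u]) (n2_nonneg u)
        exact n2_eq_zero hn2
      have hsurj : Function.Surjective (Matrix.mulVecLin A.transpose) :=
        (LinearMap.injective_iff_surjective).mp hinj
      obtain ⟨u, hu⟩ := hsurj w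
      have hu' : A.transpose.mulVec u = w := hu
      have hdot : n2 w = ∑ i, u i * (A.mulVec w) i := by
        rw [← adjoint_dot A u w, hu']
        simp [n2, sq]
      have hcs : (n2 w)^2 ≤ n2 u * n2 (A.mulVec w) := by
        rw [hdot]
        exact dot_sq_le u (A.mulVec w)
      have hnu : (1-K) * n2 u ≤ n2 w := by rw [← hu']; exact hlo u
      rcases eq_or_lt_of_le (n2_nonneg w) with h0 | hpos
      · have := n2_nonneg (A.mulVec w)
        nlinarith
      · -- (1-K) * (n2 w)^2 ≤ (1-K) * n2 u * n2 (A w) ≤ n2 w * n2 (A w)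
        have h1 : (1-K) * (n2 w)^2 ≤ ((1-K) * n2 u) * n2 (A.mulVec w) := by
          have := n2_nonneg (A.mulVec w)
          nlinarith [mul_le_mul_of_nonneg_left hcs (le_of_lt (by linarith : (0:ℝ) < 1-K))]
        have h2 : ((1-K) * n2 u) * n2 (A.mulVec w) ≤ n2 w * n2 (A.mulVec w) :=
          mul_le_mul_of_nonneg_right hnu (n2_nonneg _)
        nlinarith
  · -- upper bound: n2 (A w) ≤ (1+K) * n2 w
    set v := A.mulVec w with hv
    have hdot : n2 v = ∑ i, (A.transpose.mulVec v) i * w i := by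
      rw [adjoint_dot A v w, ← hv]
      simp [n2, sq]
    have hcs : (n2 v)^2 ≤ n2 (A.transpose.mulVec v) * n2 w := by
      rw [hdot]
      exact dot_sq_le _ _
    have hub : n2 (A.transpose.mulVec v) ≤ (1+K) * n2 v := hup v
    rcases eq_or_lt_of_le (n2_nonneg v) with h0 | hpos
    · have := n2_nonneg w
      nlinarith
    · have : (n2 v)^2 ≤ ((1+K) * n2 v) * n2 w :=
        le_trans hcs (mul_le_mul_of_nonneg_right hub (n2_nonneg _))
      nlinarith
end transfer

lemma l1_le_sqrt_l2 {n : ℕ} (x y : Fin n → ℝ) :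
    ∑ k, |y k - x k| ≤ Real.sqrt n * Real.sqrt (∑ i, (x i - y i)^2) := by
  have h : (∑ k, |y k - x k|)^2 ≤ ((Finset.univ : Finset (Fin n)).card : ℝ) * ∑ k, |y k - x k|^2 := by
    exact_mod_cast sq_sum_le_card_mul_sum_sq (s := (Finset.univ : Finset (Fin n)))
      (f := fun k => |y k - x k|)
  have h2 : (∑ k, |y k - x k|)^2 ≤ (n:ℝ) * ∑ i, (x i - y i)^2 := by
    calc (∑ k, |y k - x k|)^2 ≤ ((Finset.univ : Finset (Fin n)).card : ℝ) * ∑ k, |y k - x k|^2 := h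
      _ = (n:ℝ) * ∑ i, (x i - y i)^2 := by
          rw [Finset.card_univ, Fintype.card_fin]
          congr 1
          refine Finset.sum_congr rfl fun k _ => ?_
          rw [sq_abs]
          ring
  have hnn : (0:ℝ) ≤ ∑ k, |y k - x k| := Finset.sum_nonneg fun k _ => abs_nonneg _
  calc ∑ k, |y k - x k| = Real.sqrt ((∑ k, |y k - x k|)^2) := (Real.sqrt_sq hnn).symm
    _ ≤ Real.sqrt ((n:ℝ) * ∑ i, (x i - y i)^2) := Real.sqrt_le_sqrt h2
    _ = Real.sqrt n * Real.sqrt (∑ i, (x i - y i)^2) := Real.sqrt_mul (by positivity) _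

lemma continuous_evalP {n : ℕ} (P : MvPolynomial (Fin n) ℝ) :
    Continuous fun x : Fin n → ℝ => MvPolynomial.eval x P := by
  induction P using MvPolynomial.induction_on with
  | C a => simpa using continuous_const
  | add p q hp hq => simp only [map_add]; exact hp.add hq
  | mul_X p i hp => simp only [map_mul, MvPolynomial.eval_X]; exact hp.mul (continuous_apply i)

lemma isCompact_Box (n : ℕ) : IsCompact ({x | ∀ i, |x i| ≤ 1} : Set (Fin n → ℝ)) := by
  have : ({x | ∀ i, |x i| ≤ 1} : Set (Fin n → ℝ))
      = Set.pi Set.univ (fun _ : Fin n => Set.Icc (-1:ℝ) 1) := by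
    ext x
    constructor
    · intro h i _
      exact Set.mem_Icc.mpr (abs_le.mp (h i))
    · intro h i
      exact abs_le.mpr (Set.mem_Icc.mp (h i (Set.mem_univ i)))
  rw [this]
  exact isCompact_univ_pi fun _ => isCompact_Icc

lemma le_choose_succ (a k : ℕ) : a + 1 ≤ (a + k + 1).choose (k+1) := by
  induction a with
  | zero => simp [Nat.choose_self]
  | succ a ih =>
    have h : (a + 1 + k + 1).choose (k+1) = (a + k + 1).choose k + (a + k + 1).choose (k+1) := by
      have e : a + 1 + k + 1 = (a + k + 1) + 1 := by omega
      rw [e, Nat.choose_succ_succ' (a+k+1) k]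
    have hpos : 0 < (a + k + 1).choose k := Nat.choose_pos (by omega)
    omega

lemma nd_le_choose (n d : ℕ) (hd : 1 ≤ d) : n * d ≤ (n + d).choose d := by
  induction d with
  | zero => omega
  | succ d ih =>
    rcases Nat.eq_zero_or_pos d with h0 | hd'
    · subst h0
      simp [Nat.choose_one_right]
    · have h1 : n * d ≤ (n + d).choose d := ih hd'
      have h2 : (n + (d+1)).choose (d+1) = (n + d).choose d + (n + d).choose (d+1) := by
        have : n + (d + 1) = (n + d) + 1 := by omega
        rw [this, Nat.choose_succ_succ' (n+d) d]
      rcases Nat.eq_zero_or_pos n with hn0 | hn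
      · subst hn0
        simp
      · have h3 : n ≤ (n + d).choose (d+1) := by
          have e : n + d = (n-1) + d + 1 := by omega
          have := le_choose_succ (n-1) d
          rw [← e] at this
          omega
        have hmul : n*(d+1) = n*d + n := by ring
        omega

/-- Supremum norm of a function over the box [−1,1]ⁿ. -/
noncomputable def supNormBox {n : ℕ} (f : (Fin n → ℝ) → ℝ) : ℝ := sSup (f '' Box n)

/-- Euclidean (ℓ²) distance on ℝⁿ. -/
noncomputable def dist2 {n : ℕ} (x y : Fin n → ℝ) : ℝ := Real.sqrt (∑ i, (x i - y i) ^ 2)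

/-- A coupling between two finitely supported measures on ℝⁿ. -/
def IsCoupling {n : ℕ} (X Y : Finset (Fin n → ℝ)) (μX μY : (Fin n → ℝ) → ℝ)
    (γ : (Fin n → ℝ) → (Fin n → ℝ) → ℝ) : Prop :=
  (∀ x y, 0 ≤ γ x y) ∧ (∀ x ∈ X, ∑ y ∈ Y, γ x y = μX x) ∧ (∀ y ∈ Y, ∑ x ∈ X, γ x y = μY y)

/-- The 1-Wasserstein distance (in Euclidean distance) of two finitely supported measures. -/
noncomputable def wassersteinDist {n : ℕ} (X Y : Finset (Fin n → ℝ))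
    (μX μY : (Fin n → ℝ) → ℝ) : ℝ :=
  sInf {r : ℝ | ∃ γ, IsCoupling X Y μX μY γ ∧ r = ∑ x ∈ X, ∑ y ∈ Y, γ x y * dist2 x y}

lemma orth_sum {n : ℕ} {ι : Type} [Fintype ι] [DecidableEq ι] (S : Finset (Fin n → ℝ))
    (g : ι → (Fin n → ℝ) → ℝ)
    (h : ∀ i j, (S.card : ℝ)⁻¹ * ∑ s ∈ S, g i s * g j s = if i = j then 1 else 0)
    (v : ι → ℝ) :
    (S.card : ℝ)⁻¹ * ∑ s ∈ S, (∑ k, v k * g k s)^2 = ∑ k, (v k)^2 := by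
  have expand : ∀ s, (∑ k, v k * g k s)^2 = ∑ i, ∑ j, (v i * v j) * (g i s * g j s) := by
    intro s
    rw [sq, Finset.sum_mul_sum]
    exact Finset.sum_congr rfl fun i _ => Finset.sum_congr rfl fun j _ => by ring
  calc (S.card : ℝ)⁻¹ * ∑ s ∈ S, (∑ k, v k * g k s)^2
      = (S.card : ℝ)⁻¹ * ∑ s ∈ S, ∑ i, ∑ j, (v i * v j) * (g i s * g j s) := by
        rw [Finset.sum_congr rfl fun s _ => expand s]
    _ = (S.card : ℝ)⁻¹ * ∑ i, ∑ s ∈ S, ∑ j, (v i * v j) * (g i s * g j s) := by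
        rw [Finset.sum_comm]
    _ = (S.card : ℝ)⁻¹ * ∑ i, ∑ j, ∑ s ∈ S, (v i * v j) * (g i s * g j s) := by
        congr 1
        exact Finset.sum_congr rfl fun i _ => Finset.sum_comm
    _ = ∑ i, ∑ j, (v i * v j) * ((S.card : ℝ)⁻¹ * ∑ s ∈ S, g i s * g j s) := by
        rw [Finset.mul_sum]
        refine Finset.sum_congr rfl fun i _ => ?_
        rw [Finset.mul_sum]
        refine Finset.sum_congr rfl fun j _ => ?_
        rw [← Finset.mul_sum]
        ring
    _ = ∑ i, ∑ j, (v i * v j) * (if i = j then 1 else 0) := by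
        exact Finset.sum_congr rfl fun i _ => Finset.sum_congr rfl fun j _ => by rw [h i j]
    _ = ∑ k, (v k)^2 := by
        refine Finset.sum_congr rfl fun i _ => ?_
        rw [Finset.sum_eq_single i]
        · simp [sq]
        · intro j _ hij
          simp [Ne.symm hij]
        · simp

lemma C1d_le (d : ℕ) (hd : 1 ≤ d) : C1d d ≤ 2*(d:ℝ)^3 := by
  rw [C1d]
  calc ∑ k ∈ Finset.range (d+1), 2*(k:ℝ)^2
      ≤ ∑ k ∈ Finset.range (d+1), 2*(d:ℝ)*(k:ℝ) := by
        apply Finset.sum_le_sum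
        intro k hk
        have hkd : (k:ℝ) ≤ d := by
          exact_mod_cast Nat.lt_succ_iff.mp (Finset.mem_range.mp hk)
        nlinarith [Nat.cast_nonneg (α := ℝ) k]
    _ = 2*(d:ℝ) * ∑ k ∈ Finset.range (d+1), (k:ℝ) := by rw [Finset.mul_sum]
    _ = 2*(d:ℝ) * ((d:ℝ)*(d+1)/2) := by
        congr 1
        have hNat := Finset.sum_range_id_mul_two (d+1)
        rw [Nat.add_sub_cancel] at hNat
        have h2 : (∑ i ∈ Finset.range (d+1), (i:ℝ)) * 2 = ((d+1):ℝ) * d := by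
          have hc := congrArg (fun m : ℕ => (m:ℝ)) hNat
          push_cast at hc
          linarith
        linarith
    _ ≤ 2*(d:ℝ)^3 := by
        have hd1 : (1:ℝ) ≤ d := by exact_mod_cast hd
        have hsq : (d:ℝ)^2 ≤ (d:ℝ)^3 := by nlinarith
        nlinarith

lemma const_cmp (n d : ℕ) : 2 * Real.sqrt n * C1d d ≤ 4 * ((n+d).choose d : ℝ) * d^2 := by
  rcases Nat.eq_zero_or_pos d with h0 | hd
  · subst h0
    simp [C1d]
  · have h1 : C1d d ≤ 2*(d:ℝ)^3 := C1d_le d hd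
    have hsq : Real.sqrt n ≤ (n:ℝ) := by
      have h1 : (n:ℝ) ≤ ((n:ℝ))^2 := by
        rcases Nat.eq_zero_or_pos n with hn0 | hn
        · subst hn0; simp
        · have : (1:ℝ) ≤ n := by exact_mod_cast hn
          nlinarith
      calc Real.sqrt n ≤ Real.sqrt ((n:ℝ)^2) := Real.sqrt_le_sqrt h1
        _ = n := Real.sqrt_sq (Nat.cast_nonneg n)
    have hnd : (n:ℝ) * d ≤ ((n+d).choose d : ℝ) := by
      exact_mod_cast nd_le_choose n d hd
    have hsqnn : 0 ≤ Real.sqrt n := Real.sqrt_nonneg _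
    have hC1nn : 0 ≤ C1d d := Finset.sum_nonneg fun k _ => by positivity
    calc 2 * Real.sqrt n * C1d d ≤ 2 * Real.sqrt n * (2*(d:ℝ)^3) := by
          apply mul_le_mul_of_nonneg_left h1 (by positivity)
      _ = 4 * (Real.sqrt n * d) * (d:ℝ)^2 := by ring
      _ ≤ 4 * ((n:ℝ) * d) * (d:ℝ)^2 := by
          have : Real.sqrt n * (d:ℝ) ≤ (n:ℝ) * d :=
            mul_le_mul_of_nonneg_right hsq (by positivity)
          nlinarith [sq_nonneg ((d:ℝ))]
      _ ≤ 4 * ((n+d).choose d : ℝ) * (d:ℝ)^2 := by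
          apply mul_le_mul_of_nonneg_right _ (by positivity)
          linarith

lemma main_aux {n d : ℕ} {ι : Type} [Fintype ι] [DecidableEq ι]
    (X Y : Finset (Fin n → ℝ)) (hX : ↑X ⊆ Box n) (hY : ↑Y ⊆ Box n)
    (p q : ι → (Fin n → ℝ) → ℝ)
    (A : Matrix ι ι ℝ)
    (hpq : ∀ i x, p i x = ∑ k, A i k * q k x)
    (P : (ι → ℝ) → MvPolynomial (Fin n) ℝ)
    (hPdeg : ∀ u, (P u).totalDegree ≤ d)
    (hPeval : ∀ u x, MvPolynomial.eval x (P u) = ∑ i, u i * p i x)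
    (horthX : ∀ i j, (X.card : ℝ)⁻¹ * ∑ x ∈ X, p i x * p j x = if i = j then 1 else 0)
    (horthY : ∀ i j, (Y.card : ℝ)⁻¹ * ∑ y ∈ Y, q i y * q j y = if i = j then 1 else 0)
    (M : ℝ) (hM0 : 0 ≤ M) (hM : ∀ a ∈ Box n, (∑ i, (p i a)^2) ≤ M)
    (γ : (Fin n → ℝ) → (Fin n → ℝ) → ℝ)
    (hγ : IsCoupling X Y (fun _ => (X.card:ℝ)⁻¹) (fun _ => (Y.card:ℝ)⁻¹) γ)
    (z : Fin n → ℝ) :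
    |(∑ i, (p i z)^2) - ∑ i, (q i z)^2| ≤
      (2 * Real.sqrt n * C1d d) * M * (∑ x ∈ X, ∑ y ∈ Y, γ x y * dist2 x y)
        * (∑ i, (q i z)^2) := by
  obtain ⟨hγ0, hγX, hγY⟩ := hγ
  set r : ℝ := ∑ x ∈ X, ∑ y ∈ Y, γ x y * dist2 x y with hr
  have hdist0 : ∀ x y : Fin n → ℝ, 0 ≤ dist2 x y := fun x y => Real.sqrt_nonneg _
  have hr0 : 0 ≤ r := Finset.sum_nonneg fun x _ => Finset.sum_nonneg fun y _ =>
    mul_nonneg (hγ0 x y) (hdist0 x y)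
  have hC1nn : 0 ≤ C1d d := Finset.sum_nonneg fun k _ => by positivity
  have hsqn : 0 ≤ Real.sqrt n := Real.sqrt_nonneg _
  set K : ℝ := 2 * Real.sqrt n * C1d d * M * r with hK
  have hKnn : 0 ≤ K := by
    rw [hK]
    exact mul_nonneg (mul_nonneg (mul_nonneg (by positivity) hC1nn) hM0) hr0
  -- eval bound on box
  have hebound : ∀ u : ι → ℝ, ∀ a ∈ Box n, |MvPolynomial.eval a (P u)| ≤ Real.sqrt (M * n2 u) := by
    intro u a ha
    have h1 : (MvPolynomial.eval a (P u))^2 ≤ n2 u * ∑ i, (p i a)^2 := by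
      rw [hPeval]
      simpa [n2] using dot_sq_le u (fun i => p i a)
    have h2 : (MvPolynomial.eval a (P u))^2 ≤ M * n2 u := by
      calc (MvPolynomial.eval a (P u))^2 ≤ n2 u * ∑ i, (p i a)^2 := h1
        _ ≤ n2 u * M := mul_le_mul_of_nonneg_left (hM a ha) (n2_nonneg u)
        _ = M * n2 u := mul_comm _ _
    calc |MvPolynomial.eval a (P u)| = Real.sqrt ((MvPolynomial.eval a (P u))^2) :=
          (Real.sqrt_sq_eq_abs _).symm
      _ ≤ Real.sqrt (M * n2 u) := Real.sqrt_le_sqrt h2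
  have hMn2 : ∀ u : ι → ℝ, 0 ≤ M * n2 u := fun u => mul_nonneg hM0 (n2_nonneg u)
  -- pointwise coupling bound
  have hptw : ∀ u : ι → ℝ, ∀ x ∈ X, ∀ y ∈ Y,
      |(MvPolynomial.eval y (P u))^2 - (MvPolynomial.eval x (P u))^2|
        ≤ 2 * Real.sqrt n * C1d d * (M * n2 u) * dist2 x y := by
    intro u x hx y hy
    have hxB : x ∈ Box n := hX hx
    have hyB : y ∈ Box n := hY hy
    have hdiff : |MvPolynomial.eval y (P u) - MvPolynomial.eval x (P u)|
        ≤ C1d d * Real.sqrt (M * n2 u) * (Real.sqrt n * dist2 x y) := by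
      calc |MvPolynomial.eval y (P u) - MvPolynomial.eval x (P u)|
          ≤ C1d d * Real.sqrt (M * n2 u) * ∑ k, |y k - x k| :=
            box_lip (P u) (hPdeg u) (Real.sqrt (M * n2 u)) (hebound u) x y hxB hyB
        _ ≤ C1d d * Real.sqrt (M * n2 u) * (Real.sqrt n * dist2 x y) := by
            apply mul_le_mul_of_nonneg_left _ (by positivity)
            rw [dist2]
            exact l1_le_sqrt_l2 x y
    have hsum : |MvPolynomial.eval y (P u) + MvPolynomial.eval x (P u)|
        ≤ 2 * Real.sqrt (M * n2 u) := by
      calc |MvPolynomial.eval y (P u) + MvPolynomial.eval x (P u)|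
          ≤ |MvPolynomial.eval y (P u)| + |MvPolynomial.eval x (P u)| := abs_add_le _ _
        _ ≤ Real.sqrt (M * n2 u) + Real.sqrt (M * n2 u) :=
            add_le_add (hebound u y hyB) (hebound u x hxB)
        _ = 2 * Real.sqrt (M * n2 u) := by ring
    have hfact : (MvPolynomial.eval y (P u))^2 - (MvPolynomial.eval x (P u))^2
        = (MvPolynomial.eval y (P u) - MvPolynomial.eval x (P u))
          * (MvPolynomial.eval y (P u) + MvPolynomial.eval x (P u)) := by ring
    rw [hfact, abs_mul]
    calc |MvPolynomial.eval y (P u) - MvPolynomial.eval x (P u)|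
          * |MvPolynomial.eval y (P u) + MvPolynomial.eval x (P u)|
        ≤ (C1d d * Real.sqrt (M * n2 u) * (Real.sqrt n * dist2 x y))
          * (2 * Real.sqrt (M * n2 u)) := by
          apply mul_le_mul hdiff hsum (abs_nonneg _)
            (mul_nonneg (mul_nonneg hC1nn (Real.sqrt_nonneg _))
              (mul_nonneg hsqn (hdist0 x y)))
      _ = 2 * Real.sqrt n * C1d d * (Real.sqrt (M * n2 u) * Real.sqrt (M * n2 u)) * dist2 x y := by
          ring
      _ = 2 * Real.sqrt n * C1d d * (M * n2 u) * dist2 x y := by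
          rw [Real.mul_self_sqrt (hMn2 u)]
  -- quadratic form bound
  have hquad : ∀ u : ι → ℝ, |n2 (A.transpose.mulVec u) - n2 u| ≤ K * n2 u := by
    intro u
    have hATu : ∀ k, (A.transpose.mulVec u) k = ∑ i, u i * A i k := by
      intro k
      simp [Matrix.mulVec, dotProduct, Matrix.transpose_apply, mul_comm]
    have hevalY : ∀ x, MvPolynomial.eval x (P u) = ∑ k, (A.transpose.mulVec u) k * q k x := by
      intro x
      rw [hPeval]
      calc ∑ i, u i * p i x = ∑ i, ∑ k, u i * (A i k * q k x) := by
            refine Finset.sum_congr rfl fun i _ => ?_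
            rw [hpq i x, Finset.mul_sum]
        _ = ∑ k, ∑ i, u i * (A i k * q k x) := Finset.sum_comm
        _ = ∑ k, (A.transpose.mulVec u) k * q k x := by
            refine Finset.sum_congr rfl fun k _ => ?_
            rw [hATu k, Finset.sum_mul]
            exact Finset.sum_congr rfl fun i _ => by ring
    have hSX : (X.card:ℝ)⁻¹ * ∑ x ∈ X, (MvPolynomial.eval x (P u))^2 = n2 u := by
      rw [show (∑ x ∈ X, (MvPolynomial.eval x (P u))^2) = ∑ x ∈ X, (∑ k, u k * p k x)^2 from
        Finset.sum_congr rfl fun x _ => by rw [hPeval]]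
      simpa [n2] using orth_sum X p horthX u
    have hSY : (Y.card:ℝ)⁻¹ * ∑ y ∈ Y, (MvPolynomial.eval y (P u))^2
        = n2 (A.transpose.mulVec u) := by
      rw [show (∑ y ∈ Y, (MvPolynomial.eval y (P u))^2)
          = ∑ y ∈ Y, (∑ k, (A.transpose.mulVec u) k * q k y)^2 from
        Finset.sum_congr rfl fun y _ => by rw [hevalY]]
      simpa [n2] using orth_sum Y q horthY (A.transpose.mulVec u)
    have hγX' : ∀ x ∈ X, (∑ y ∈ Y, γ x y) = (X.card:ℝ)⁻¹ := fun x hx => hγX x hx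
    have hγY' : ∀ y ∈ Y, (∑ x ∈ X, γ x y) = (Y.card:ℝ)⁻¹ := fun y hy => hγY y hy
    have hmargX : (X.card:ℝ)⁻¹ * ∑ x ∈ X, (MvPolynomial.eval x (P u))^2
        = ∑ x ∈ X, ∑ y ∈ Y, γ x y * (MvPolynomial.eval x (P u))^2 := by
      rw [Finset.mul_sum]
      refine Finset.sum_congr rfl fun x hx => ?_
      rw [← hγX' x hx, Finset.sum_mul]
    have hmargY : (Y.card:ℝ)⁻¹ * ∑ y ∈ Y, (MvPolynomial.eval y (P u))^2
        = ∑ x ∈ X, ∑ y ∈ Y, γ x y * (MvPolynomial.eval y (P u))^2 := by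
      calc (Y.card:ℝ)⁻¹ * ∑ y ∈ Y, (MvPolynomial.eval y (P u))^2
          = ∑ y ∈ Y, (Y.card:ℝ)⁻¹ * (MvPolynomial.eval y (P u))^2 := Finset.mul_sum _ _ _
        _ = ∑ y ∈ Y, ∑ x ∈ X, γ x y * (MvPolynomial.eval y (P u))^2 := by
            refine Finset.sum_congr rfl fun y hy => ?_
            rw [← hγY' y hy, Finset.sum_mul]
        _ = ∑ x ∈ X, ∑ y ∈ Y, γ x y * (MvPolynomial.eval y (P u))^2 := Finset.sum_comm
    have hdiffsum : n2 (A.transpose.mulVec u) - n2 u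
        = ∑ x ∈ X, ∑ y ∈ Y, γ x y
            * ((MvPolynomial.eval y (P u))^2 - (MvPolynomial.eval x (P u))^2) := by
      rw [← hSY, ← hSX, hmargY, hmargX, ← Finset.sum_sub_distrib]
      refine Finset.sum_congr rfl fun x _ => ?_
      rw [← Finset.sum_sub_distrib]
      exact Finset.sum_congr rfl fun y _ => by ring
    rw [hdiffsum]
    calc |∑ x ∈ X, ∑ y ∈ Y, γ x y
            * ((MvPolynomial.eval y (P u))^2 - (MvPolynomial.eval x (P u))^2)|
        ≤ ∑ x ∈ X, ∑ y ∈ Y, γ x y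
            * (2 * Real.sqrt n * C1d d * (M * n2 u) * dist2 x y) := by
          apply le_trans (Finset.abs_sum_le_sum_abs _ _)
          apply Finset.sum_le_sum
          intro x hx
          apply le_trans (Finset.abs_sum_le_sum_abs _ _)
          apply Finset.sum_le_sum
          intro y hy
          rw [abs_mul, abs_of_nonneg (hγ0 x y)]
          exact mul_le_mul_of_nonneg_left (hptw u x hx y hy) (hγ0 x y)
      _ = (2 * Real.sqrt n * C1d d * (M * n2 u)) * ∑ x ∈ X, ∑ y ∈ Y, γ x y * dist2 x y := by
          rw [Finset.mul_sum]
          refine Finset.sum_congr rfl fun x _ => ?_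
          rw [Finset.mul_sum]
          refine Finset.sum_congr rfl fun y _ => ?_
          ring
      _ = K * n2 u := by rw [hK, hr]; ring
  have htr := transfer A K hKnn hquad (fun k => q k z)
  have hAw : A.mulVec (fun k => q k z) = fun i => p i z := by
    funext i
    rw [hpq i z]
    simp [Matrix.mulVec, dotProduct]
  rw [hAw] at htr
  have e1 : n2 (fun i => p i z) = ∑ i, (p i z)^2 := rfl
  have e2 : n2 (fun k => q k z) = ∑ i, (q i z)^2 := rfl
  rw [e1, e2] at htr
  calc |(∑ i, (p i z)^2) - ∑ i, (q i z)^2| ≤ K * ∑ i, (q i z)^2 := htr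
    _ = 2 * Real.sqrt n * C1d d * M * r * ∑ i, (q i z)^2 := by rw [hK]
    _ = (2 * Real.sqrt n * C1d d) * M * r * (∑ i, (q i z)^2) := by ring

end Helpers

open MvPolynomial Finset

/-- Wasserstein stability of the Christoffel polynomial. For finite
nondegenerate sample sets X, Y ⊆ [−1,1]ⁿ with empirical measures μ_X, μ_Y and degree-d
Christoffel polynomials Λ_X, Λ_Y (given via orthonormal bases for the empirical inner
products), with C = 4·binom(n+d,d)·d², for all x:
|Λ_X(x) − Λ_Y(x)| ≤ C·‖Λ_X‖_∞·d_W(μ_X,μ_Y)·Λ_Y(x). -/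
theorem christoffel_wasserstein_stability {n d : ℕ} {ι : Type} [Fintype ι] [DecidableEq ι]
    (X Y : Finset (Fin n → ℝ)) (hX : ↑X ⊆ Box n) (hY : ↑Y ⊆ Box n)
    (bX bY : Module.Basis ι ℝ (restrictTotalDegree (Fin n) ℝ d))
    (horthX : ∀ i j, (X.card : ℝ)⁻¹ *
        ∑ x ∈ X, eval x ((bX i : restrictTotalDegree (Fin n) ℝ d) : MvPolynomial (Fin n) ℝ) *
          eval x ((bX j : restrictTotalDegree (Fin n) ℝ d) : MvPolynomial (Fin n) ℝ) =
        if i = j then 1 else 0)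
    (horthY : ∀ i j, (Y.card : ℝ)⁻¹ *
        ∑ y ∈ Y, eval y ((bY i : restrictTotalDegree (Fin n) ℝ d) : MvPolynomial (Fin n) ℝ) *
          eval y ((bY j : restrictTotalDegree (Fin n) ℝ d) : MvPolynomial (Fin n) ℝ) =
        if i = j then 1 else 0) :
    ∀ z : Fin n → ℝ,
      |(∑ i, (eval z ((bX i : restrictTotalDegree (Fin n) ℝ d) : MvPolynomial (Fin n) ℝ)) ^ 2) -
          ∑ i, (eval z ((bY i : restrictTotalDegree (Fin n) ℝ d) : MvPolynomial (Fin n) ℝ)) ^ 2| ≤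
        (4 * (n + d).choose d * d ^ 2 : ℝ) *
          supNormBox (fun x => ∑ i, (eval x ((bX i : restrictTotalDegree (Fin n) ℝ d) : MvPolynomial (Fin n) ℝ)) ^ 2) *
          wassersteinDist X Y (fun _ => (X.card : ℝ)⁻¹) (fun _ => (Y.card : ℝ)⁻¹) *
          (∑ i, (eval z ((bY i : restrictTotalDegree (Fin n) ℝ d) : MvPolynomial (Fin n) ℝ)) ^ 2) := by
  intro z
  rcases isEmpty_or_nonempty ι with hι | hι
  · letI := hι
    simp only [Finset.univ_eq_empty, Finset.sum_empty, sub_zero, abs_zero, mul_zero]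
    exact le_rfl
  obtain ⟨i0⟩ := hι
  have hXne : X.Nonempty := by
    rcases X.eq_empty_or_nonempty with h | h
    · exfalso
      have h1 := horthX i0 i0
      rw [h] at h1
      simp at h1
    · exact h
  have hYne : Y.Nonempty := by
    rcases Y.eq_empty_or_nonempty with h | h
    · exfalso
      have h1 := horthY i0 i0
      rw [h] at h1
      simp at h1
    · exact h
  have hXcard : (X.card : ℝ) ≠ 0 := by
    exact_mod_cast Finset.card_ne_zero_of_mem hXne.choose_spec
  have hYcard : (Y.card : ℝ) ≠ 0 := by
    exact_mod_cast Finset.card_ne_zero_of_mem hYne.choose_spec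
  -- the Christoffel polynomial of X and its sup norm
  have hcontLam : Continuous fun x : Fin n → ℝ =>
      ∑ i, (eval x ((bX i : restrictTotalDegree (Fin n) ℝ d) : MvPolynomial (Fin n) ℝ)) ^ 2 :=
    continuous_finset_sum _ fun i _ => (continuous_evalP _).pow 2
  set M : ℝ := supNormBox (fun x =>
    ∑ i, (eval x ((bX i : restrictTotalDegree (Fin n) ℝ d) : MvPolynomial (Fin n) ℝ)) ^ 2)
    with hM
  have hbdd : BddAbove ((fun x : Fin n → ℝ =>
      ∑ i, (eval x ((bX i : restrictTotalDegree (Fin n) ℝ d) : MvPolynomial (Fin n) ℝ)) ^ 2) ''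
        Box n) :=
    ((isCompact_Box n).image_of_continuousOn hcontLam.continuousOn).bddAbove
  have hMub : ∀ a ∈ Box n,
      (∑ i, (eval a ((bX i : restrictTotalDegree (Fin n) ℝ d) : MvPolynomial (Fin n) ℝ)) ^ 2) ≤ M :=
    fun a ha => le_csSup hbdd ⟨a, ha, rfl⟩
  have hM0 : 0 ≤ M := by
    obtain ⟨x0, hx0⟩ := hXne
    exact le_trans (Finset.sum_nonneg fun i _ => sq_nonneg _) (hMub x0 (hX hx0))
  -- change of basis matrix
  set A : Matrix ι ι ℝ := Matrix.of fun i k => (bY.repr (bX i)) k with hA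
  have hpq : ∀ i x, eval x ((bX i : restrictTotalDegree (Fin n) ℝ d) : MvPolynomial (Fin n) ℝ)
      = ∑ k, A i k * eval x ((bY k : restrictTotalDegree (Fin n) ℝ d) : MvPolynomial (Fin n) ℝ) := by
    intro i x
    have h := Module.Basis.sum_repr bY (bX i)
    have hcoe : ((bX i : restrictTotalDegree (Fin n) ℝ d) : MvPolynomial (Fin n) ℝ)
        = ∑ k, (bY.repr (bX i)) k •
            ((bY k : restrictTotalDegree (Fin n) ℝ d) : MvPolynomial (Fin n) ℝ) := by
      conv_lhs => rw [← h]
      push_cast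
      rfl
    rw [hcoe, map_sum]
    exact Finset.sum_congr rfl fun k _ => by rw [MvPolynomial.smul_eval]; rfl
  -- polynomial attached to a coefficient vector
  set P : (ι → ℝ) → MvPolynomial (Fin n) ℝ := fun u =>
    ((∑ i, u i • bX i : restrictTotalDegree (Fin n) ℝ d) : MvPolynomial (Fin n) ℝ) with hP
  have hPdeg : ∀ u, (P u).totalDegree ≤ d := by
    intro u
    have h := Submodule.coe_mem (∑ i, u i • bX i)
    rwa [MvPolynomial.mem_restrictTotalDegree] at h
  have hPeval : ∀ u x, MvPolynomial.eval x (P u)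
      = ∑ i, u i * eval x ((bX i : restrictTotalDegree (Fin n) ℝ d) : MvPolynomial (Fin n) ℝ) := by
    intro u x
    have hcoe : ((∑ i, u i • bX i : restrictTotalDegree (Fin n) ℝ d) : MvPolynomial (Fin n) ℝ)
        = ∑ i, u i • ((bX i : restrictTotalDegree (Fin n) ℝ d) : MvPolynomial (Fin n) ℝ) := by
      push_cast
      rfl
    show MvPolynomial.eval x
        ((((∑ i, u i • bX i : restrictTotalDegree (Fin n) ℝ d)) : MvPolynomial (Fin n) ℝ)) = _
    rw [hcoe, map_sum]
    exact Finset.sum_congr rfl fun i _ => by rw [MvPolynomial.smul_eval]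
  -- per-coupling bound
  have key : ∀ γ, IsCoupling X Y (fun _ => (X.card:ℝ)⁻¹) (fun _ => (Y.card:ℝ)⁻¹) γ →
      |(∑ i, (eval z ((bX i : restrictTotalDegree (Fin n) ℝ d) : MvPolynomial (Fin n) ℝ)) ^ 2) -
          ∑ i, (eval z ((bY i : restrictTotalDegree (Fin n) ℝ d) : MvPolynomial (Fin n) ℝ)) ^ 2| ≤
        (2 * Real.sqrt n * C1d d) * M * (∑ x ∈ X, ∑ y ∈ Y, γ x y * dist2 x y) *
          (∑ i, (eval z ((bY i : restrictTotalDegree (Fin n) ℝ d) : MvPolynomial (Fin n) ℝ)) ^ 2) := by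
    intro γ hγ
    exact main_aux X Y hX hY
      (fun i x => eval x ((bX i : restrictTotalDegree (Fin n) ℝ d) : MvPolynomial (Fin n) ℝ))
      (fun i x => eval x ((bY i : restrictTotalDegree (Fin n) ℝ d) : MvPolynomial (Fin n) ℝ))
      A hpq P hPdeg hPeval horthX horthY M hM0 hMub γ hγ z
  -- conclude via the infimum over couplings
  set ΛY : ℝ :=
    ∑ i, (eval z ((bY i : restrictTotalDegree (Fin n) ℝ d) : MvPolynomial (Fin n) ℝ)) ^ 2
    with hΛY
  have hΛY0 : 0 ≤ ΛY := Finset.sum_nonneg fun i _ => sq_nonneg _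
  set c' : ℝ := 4 * ((n + d).choose d : ℝ) * (d:ℝ)^2 * M * ΛY with hc'
  have hc'0 : 0 ≤ c' := by
    rw [hc']
    positivity
  set S : Set ℝ := {r : ℝ | ∃ γ, IsCoupling X Y (fun _ => (X.card:ℝ)⁻¹) (fun _ => (Y.card:ℝ)⁻¹) γ
      ∧ r = ∑ x ∈ X, ∑ y ∈ Y, γ x y * dist2 x y} with hSdef
  have hWS : wassersteinDist X Y (fun _ => (X.card:ℝ)⁻¹) (fun _ => (Y.card:ℝ)⁻¹) = sInf S := rfl
  have hSne : S.Nonempty := by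
    refine ⟨∑ x ∈ X, ∑ y ∈ Y, ((X.card:ℝ)⁻¹ * (Y.card:ℝ)⁻¹) * dist2 x y,
      fun _ _ => (X.card:ℝ)⁻¹ * (Y.card:ℝ)⁻¹, ⟨?_, ?_, ?_⟩, rfl⟩
    · intro x y
      positivity
    · intro x _
      show ∑ _y ∈ Y, (X.card:ℝ)⁻¹ * (Y.card:ℝ)⁻¹ = (X.card:ℝ)⁻¹
      rw [Finset.sum_const, nsmul_eq_mul]
      calc (Y.card:ℝ) * ((X.card:ℝ)⁻¹ * (Y.card:ℝ)⁻¹)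
          = (X.card:ℝ)⁻¹ * ((Y.card:ℝ) * (Y.card:ℝ)⁻¹) := by ring
        _ = (X.card:ℝ)⁻¹ := by rw [mul_inv_cancel₀ hYcard, mul_one]
    · intro y _
      show ∑ _x ∈ X, (X.card:ℝ)⁻¹ * (Y.card:ℝ)⁻¹ = (Y.card:ℝ)⁻¹
      rw [Finset.sum_const, nsmul_eq_mul]
      calc (X.card:ℝ) * ((X.card:ℝ)⁻¹ * (Y.card:ℝ)⁻¹)
          = (Y.card:ℝ)⁻¹ * ((X.card:ℝ) * (X.card:ℝ)⁻¹) := by ring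
        _ = (Y.card:ℝ)⁻¹ := by rw [mul_inv_cancel₀ hXcard, mul_one]
  have key2 : ∀ r ∈ S,
      |(∑ i, (eval z ((bX i : restrictTotalDegree (Fin n) ℝ d) : MvPolynomial (Fin n) ℝ)) ^ 2) -
          ΛY| ≤ c' * r := by
    rintro r ⟨γ, hγ, rfl⟩
    have h1 := key γ hγ
    have hr0 : 0 ≤ ∑ x ∈ X, ∑ y ∈ Y, γ x y * dist2 x y :=
      Finset.sum_nonneg fun x _ => Finset.sum_nonneg fun y _ =>
        mul_nonneg (hγ.1 x y) (Real.sqrt_nonneg _)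
    have hconst := const_cmp n d
    calc |(∑ i, (eval z ((bX i : restrictTotalDegree (Fin n) ℝ d) : MvPolynomial (Fin n) ℝ)) ^ 2) -
          ΛY|
        ≤ (2 * Real.sqrt n * C1d d) * M * (∑ x ∈ X, ∑ y ∈ Y, γ x y * dist2 x y) * ΛY := h1
      _ = (2 * Real.sqrt n * C1d d) * (M * (∑ x ∈ X, ∑ y ∈ Y, γ x y * dist2 x y) * ΛY) := by ring
      _ ≤ (4 * ((n + d).choose d : ℝ) * (d:ℝ)^2)
            * (M * (∑ x ∈ X, ∑ y ∈ Y, γ x y * dist2 x y) * ΛY) := by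
          apply mul_le_mul_of_nonneg_right hconst
          exact mul_nonneg (mul_nonneg hM0 hr0) hΛY0
      _ = c' * ∑ x ∈ X, ∑ y ∈ Y, γ x y * dist2 x y := by rw [hc']; ring
  rw [hWS]
  rcases eq_or_lt_of_le hc'0 with hc0 | hcpos
  · obtain ⟨r0, hr0S⟩ := hSne
    have h1 := key2 r0 hr0S
    rw [← hc0] at h1
    simp only [zero_mul] at h1
    calc |(∑ i, (eval z ((bX i : restrictTotalDegree (Fin n) ℝ d) : MvPolynomial (Fin n) ℝ)) ^ 2) -
          ΛY| ≤ 0 := h1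
      _ = 4 * ((n + d).choose d : ℝ) * (d:ℝ)^2 * M * sInf S * ΛY := by
          have : (4 * ((n + d).choose d : ℝ) * (d:ℝ)^2 * M * ΛY) * sInf S = c' * sInf S := by
            rw [hc']
          rw [← hc0] at this
          simp only [zero_mul] at this
          linarith [this]
      _ = (4 * (n + d).choose d * d ^ 2 : ℝ) * M * sInf S * ΛY := by norm_num
  · have hlb : |(∑ i, (eval z ((bX i : restrictTotalDegree (Fin n) ℝ d) : MvPolynomial (Fin n) ℝ)) ^ 2) -
          ΛY| / c' ≤ sInf S := by
      apply le_csInf hSne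
      intro r hr
      rw [div_le_iff₀ hcpos]
      calc |(∑ i, (eval z ((bX i : restrictTotalDegree (Fin n) ℝ d) : MvPolynomial (Fin n) ℝ)) ^ 2) -
          ΛY| ≤ c' * r := key2 r hr
        _ = r * c' := mul_comm _ _
    have h2 : |(∑ i, (eval z ((bX i : restrictTotalDegree (Fin n) ℝ d) : MvPolynomial (Fin n) ℝ)) ^ 2) -
          ΛY| ≤ c' * sInf S := by
      have := mul_le_mul_of_nonneg_left hlb (le_of_lt hcpos)
      rwa [mul_div_cancel₀ _ (ne_of_gt hcpos)] at this
    calc |(∑ i, (eval z ((bX i : restrictTotalDegree (Fin n) ℝ d) : MvPolynomial (Fin n) ℝ)) ^ 2) -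
          ΛY| ≤ c' * sInf S := h2
      _ = (4 * (n + d).choose d * d ^ 2 : ℝ) * M * sInf S * ΛY := by rw [hc']; push_cast; ring
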